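/- arXiv:2512.17036 — 6 statements merged into one kernel-verified Lean document; each statement's English description precedes it below -/
import Mathlib

section
/- Let Ψ: ℝⁿ → ℝʳ be smooth, let f, g_1, …, g_m be smooth vector fields on ℝⁿ, and let A, B_1, …, B_m ∈ ℝ^{r×r}. Suppose that for every point x₀ ∈ ℝⁿ and every constant control vector u ∈ ℝᵐ there exist ε > 0 and a differentiable curve x: (−ε, ε) → ℝⁿ with x(0) = x₀ such that x′(t) = f(x(t)) + Σᵢ uᵢ gᵢ(x(t)) for all t, and such that the curve z = Ψ∘x satisfies z′(t) = A z(t) + Σᵢ uᵢ Bᵢ z(t) for all t. Then DΨ(x) f(x) = A Ψ(x) and DΨ(x) gᵢ(x) = Bᵢ Ψ(x) for all x ∈ ℝⁿ and all i = 1, …, m; that is, f and the linear field z ↦ Az, and each gᵢ and z ↦ Bᵢz, are Ψ-related. -/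
open Set

/-- if for every initial point and every constant control the control-affine system
admits a local solution whose lift through `Ψ` solves the bilinear system, then `f` is
`Ψ`-related to `z ↦ Az` and each `gᵢ` is `Ψ`-related to `z ↦ Bᵢz`. -/
theorem psi_related_of_lifted_solutions {n r m : ℕ}
    (Ψ : (Fin n → ℝ) → (Fin r → ℝ)) (hΨ : ContDiff ℝ (⊤ : ℕ∞) Ψ)
    (f : (Fin n → ℝ) → (Fin n → ℝ)) (g : Fin m → (Fin n → ℝ) → (Fin n → ℝ))
    (hf : ContDiff ℝ (⊤ : ℕ∞) f) (hg : ∀ i, ContDiff ℝ (⊤ : ℕ∞) (g i))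
    (A : Matrix (Fin r) (Fin r) ℝ) (B : Fin m → Matrix (Fin r) (Fin r) ℝ)
    (hsol : ∀ (x₀ : Fin n → ℝ) (u : Fin m → ℝ), ∃ ε : ℝ, 0 < ε ∧
      ∃ x : ℝ → (Fin n → ℝ), x 0 = x₀ ∧
        (∀ t ∈ Ioo (-ε) ε, HasDerivAt x (f (x t) + ∑ i, u i • g i (x t)) t) ∧
        (∀ t ∈ Ioo (-ε) ε, HasDerivAt (fun s => Ψ (x s))
          (A.mulVec (Ψ (x t)) + ∑ i, u i • (B i).mulVec (Ψ (x t))) t)) :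
    ∀ x : Fin n → ℝ,
      fderiv ℝ Ψ x (f x) = A.mulVec (Ψ x) ∧
      ∀ i : Fin m, fderiv ℝ Ψ x (g i x) = (B i).mulVec (Ψ x) := by
  intro x₀
  -- Key: for every control u, the chain rule plus uniqueness of derivatives gives
  have key : ∀ u : Fin m → ℝ,
      fderiv ℝ Ψ x₀ (f x₀ + ∑ i, u i • g i x₀) =
        A.mulVec (Ψ x₀) + ∑ i, u i • (B i).mulVec (Ψ x₀) := by
    intro u
    obtain ⟨ε, hε, x, hx0, hx', hz'⟩ := hsol x₀ u
    have h0 : (0 : ℝ) ∈ Ioo (-ε) ε := ⟨by linarith, hε⟩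
    have hxd := hx' 0 h0
    have hΨd : HasFDerivAt Ψ (fderiv ℝ Ψ (x 0)) (x 0) :=
      (hΨ.differentiable (by simp) (x 0)).hasFDerivAt
    have hchain := hΨd.comp_hasDerivAt 0 hxd
    have := (hz' 0 h0).unique hchain
    rw [hx0] at this
    exact this.symm
  have h0 := key 0
  simp only [Pi.zero_apply, zero_smul, Finset.sum_const_zero, add_zero] at h0
  constructor
  · exact h0
  · intro i
    have hi := key (Pi.single (M := fun _ => ℝ) i 1)
    have hs1 : (∑ j, (Pi.single i 1 : Fin m → ℝ) j • g j x₀) = g i x₀ := by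
      rw [Finset.sum_eq_single i]
      · simp
      · intro j _ hj; simp [Pi.single_eq_of_ne hj]
      · simp
    have hs2 : (∑ j, (Pi.single i 1 : Fin m → ℝ) j • (B j).mulVec (Ψ x₀)) = (B i).mulVec (Ψ x₀) := by
      rw [Finset.sum_eq_single i]
      · simp
      · intro j _ hj; simp [Pi.single_eq_of_ne hj]
      · simp
    rw [hs1, hs2, (fderiv ℝ Ψ x₀).map_add, h0] at hi
    exact add_left_cancel hi
end

section
/- (Necessity part of the main theorem.) Let f, g_1, …, g_m be smooth vector fields on ℝⁿ, let Ψ: ℝⁿ → ℝʳ be smooth with component functions γ₁, …, γ_r, and suppose there exist matrices A, B_1, …, B_m ∈ ℝ^{r×r} such that DΨ(x) f(x) = A Ψ(x) and DΨ(x) gᵢ(x) = Bᵢ Ψ(x) for all x ∈ ℝⁿ and i = 1, …, m. Then the subspace Γ₀ = span{γ₁, …, γ_r} ⊆ C^∞(ℝⁿ, ℝ) satisfies L_f Γ₀ ⊆ Γ₀ and L_{gᵢ} Γ₀ ⊆ Γ₀ for each i, and the EBIF sequence generated by T = {f, g_1, …, g_m} initiated with Γ₀ satisfies Γ_k = Γ₀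 for all k; in particular the EBIF module Γ* = Γ₀ is a finite-dimensional vector space. -/
open Set

/-- Lie derivative of a function along a vector field on ℝⁿ: `L_τ γ (x) = Dγ(x)·τ(x)`. -/
noncomputable def lieDeriv {n : ℕ} (τ : (Fin n → ℝ) → (Fin n → ℝ)) (γ : (Fin n → ℝ) → ℝ) :
    (Fin n → ℝ) → ℝ :=
  fun x => fderiv ℝ γ x (τ x)

/-- `L_τ Γ`: the subspace spanned by Lie derivatives of elements of `Γ`. -/
noncomputable def lieDerivSub {n : ℕ} (τ : (Fin n → ℝ) → (Fin n → ℝ))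
    (Γ : Submodule ℝ ((Fin n → ℝ) → ℝ)) : Submodule ℝ ((Fin n → ℝ) → ℝ) :=
  Submodule.span ℝ (lieDeriv τ '' (Γ : Set ((Fin n → ℝ) → ℝ)))

/-- The EBIF sequence generated by the finite set `T` of vector fields, initiated with `Γ0`:
`Γ_{k+1} = Γ_k + Σ_{τ ∈ T} L_τ Γ_k`. -/
noncomputable def ebif {n : ℕ} (T : Finset ((Fin n → ℝ) → (Fin n → ℝ)))
    (Γ0 : Submodule ℝ ((Fin n → ℝ) → ℝ)) : ℕ → Submodule ℝ ((Fin n → ℝ) → ℝ)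
  | 0 => Γ0
  | k + 1 => ebif T Γ0 k ⊔ T.sup (fun τ => lieDerivSub τ (ebif T Γ0 k))


lemma lieDerivSub_le_aux {n r : ℕ} (Ψ : (Fin n → ℝ) → (Fin r → ℝ))
    (hΨ : ContDiff ℝ (⊤ : ℕ∞) Ψ)
    (τ : (Fin n → ℝ) → (Fin n → ℝ)) (M : Matrix (Fin r) (Fin r) ℝ)
    (hM : ∀ x, fderiv ℝ Ψ x (τ x) = M.mulVec (Ψ x)) :
    lieDerivSub τ (Submodule.span ℝ (Set.range fun j : Fin r => fun x : Fin n → ℝ => Ψ x j)) ≤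
      Submodule.span ℝ (Set.range fun j : Fin r => fun x : Fin n → ℝ => Ψ x j) := by
  apply Submodule.span_le.mpr
  rintro _ ⟨γ, hγ, rfl⟩
  obtain ⟨c, hc⟩ := (Submodule.mem_span_range_iff_exists_fun ℝ).mp hγ
  set L : (Fin r → ℝ) →L[ℝ] ℝ := ∑ j, c j • ContinuousLinearMap.proj j with hLdef
  have hL : ∀ v, L v = ∑ j, c j * v j := by
    intro v
    simp [hLdef, ContinuousLinearMap.sum_apply]
  have hγL : γ = fun x => L (Ψ x) := by
    funext x
    rw [hL, ← hc]
    simp [Finset.sum_apply]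
  have hdΨ := hΨ.differentiable (by norm_num)
  have hlie : lieDeriv τ γ = fun x => L (M.mulVec (Ψ x)) := by
    funext x
    have h1 : HasFDerivAt γ (L.comp (fderiv ℝ Ψ x)) x := by
      rw [hγL]; exact L.hasFDerivAt.comp x (hdΨ x).hasFDerivAt
    simp [lieDeriv, h1.fderiv, hM x]
  rw [hlie]
  apply (Submodule.mem_span_range_iff_exists_fun ℝ).mpr
  refine ⟨fun k => ∑ j, c j * M j k, ?_⟩
  funext x
  simp only [Finset.sum_apply, Pi.smul_apply, smul_eq_mul, hL, Matrix.mulVec,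
    dotProduct, Finset.sum_mul, Finset.mul_sum, mul_assoc]
  rw [Finset.sum_comm]


/-- necessity part of the main theorem: if `Ψ` exactly bilinearizes the system,
then the span `Γ₀` of the components of `Ψ` is invariant under `L_f` and each `L_{gᵢ}`, the EBIF
sequence generated by `T = {f, g₁, …, g_m}` initiated with `Γ₀` is constantly `Γ₀`, and the
EBIF module `Γ* = Γ₀` is finite-dimensional. -/
theorem ebif_necessity {n r m : ℕ}
    (f : (Fin n → ℝ) → (Fin n → ℝ)) (g : Fin m → (Fin n → ℝ) → (Fin n → ℝ))
    (hf : ContDiff ℝ (⊤ : ℕ∞) f) (hg : ∀ i, ContDiff ℝ (⊤ : ℕ∞) (g i))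
    (Ψ : (Fin n → ℝ) → (Fin r → ℝ)) (hΨ : ContDiff ℝ (⊤ : ℕ∞) Ψ)
    (A : Matrix (Fin r) (Fin r) ℝ) (B : Fin m → Matrix (Fin r) (Fin r) ℝ)
    (hA : ∀ x, fderiv ℝ Ψ x (f x) = A.mulVec (Ψ x))
    (hB : ∀ i, ∀ x, fderiv ℝ Ψ x (g i x) = (B i).mulVec (Ψ x))
    (T : Finset ((Fin n → ℝ) → (Fin n → ℝ)))
    (hTset : (T : Set ((Fin n → ℝ) → (Fin n → ℝ))) = insert f (Set.range g))
    (Γ0 : Submodule ℝ ((Fin n → ℝ) → ℝ))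
    (hΓ0 : Γ0 = Submodule.span ℝ (Set.range fun j : Fin r => fun x : Fin n → ℝ => Ψ x j)) :
    lieDerivSub f Γ0 ≤ Γ0 ∧ (∀ i, lieDerivSub (g i) Γ0 ≤ Γ0) ∧
    (∀ k : ℕ, ebif T Γ0 k = Γ0) ∧ FiniteDimensional ℝ Γ0 := by
  subst hΓ0
  have hF := lieDerivSub_le_aux Ψ hΨ f A hA
  have hG : ∀ i, lieDerivSub (g i)
      (Submodule.span ℝ (Set.range fun j : Fin r => fun x : Fin n → ℝ => Ψ x j)) ≤
      Submodule.span ℝ (Set.range fun j : Fin r => fun x : Fin n → ℝ => Ψ x j) :=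
    fun i => lieDerivSub_le_aux Ψ hΨ (g i) (B i) (hB i)
  refine ⟨hF, hG, ?_, ?_⟩
  · intro k
    induction k with
    | zero => rfl
    | succ k ih =>
      show ebif T _ k ⊔ T.sup (fun τ => lieDerivSub τ (ebif T _ k)) = _
      rw [ih]
      apply sup_eq_left.mpr
      apply Finset.sup_le
      intro τ hτ
      have hτ' : τ ∈ (T : Set ((Fin n → ℝ) → (Fin n → ℝ))) := hτ
      rw [hTset] at hτ'
      rcases hτ' with rfl | ⟨i, rfl⟩
      · exact hF
      · exact hG i
  · exact FiniteDimensional.span_of_finite ℝ (Set.finite_range _)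
end

section
/- (Sufficiency part of the main theorem.) Let f, g_1, …, g_m be smooth vector fields on ℝⁿ, and let Γ ⊆ C^∞(ℝⁿ, ℝ) be a finite-dimensional subspace with basis γ₁, …, γ_r such that L_f Γ ⊆ Γ and L_{gᵢ} Γ ⊆ Γ for each i = 1, …, m. Define Ψ: ℝⁿ → ℝʳ by Ψ(x) = (γ₁(x), …, γ_r(x)). Then there exist matrices A, B_1, …, B_m ∈ ℝ^{r×r} such that DΨ(x) f(x) = A Ψ(x) and DΨ(x) gᵢ(x) = Bᵢ Ψ(x) for all x ∈ ℝⁿ; consequently, for any control functions uᵢ and any differentiable curve x(t) satisfying ẋ(t) = f(x(t)) + Σᵢ uᵢ(t) gᵢ(x(t)), the lifted curve z(t) = Ψ(x(t)) satisfies the bilinear equation ż(t) = A z(t) + Σᵢ uᵢ(t) Bᵢ z(t). -/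
open Set

/-- sufficiency part of the main theorem: if `Γ = span{γ₁,…,γ_r}` is a
finite-dimensional subspace with basis `γ₁,…,γ_r` invariant under `L_f` and each `L_{gᵢ}`, then
`Ψ = (γ₁,…,γ_r)` pushes `f` and the `gᵢ` forward to linear vector fields, and any solution of the
control-affine system lifts through `Ψ` to a solution of the corresponding bilinear system. -/
theorem ebif_sufficiency {n r m : ℕ}
    (f : (Fin n → ℝ) → (Fin n → ℝ)) (g : Fin m → (Fin n → ℝ) → (Fin n → ℝ))
    (hf : ContDiff ℝ (⊤ : ℕ∞) f) (hg : ∀ i, ContDiff ℝ (⊤ : ℕ∞) (g i))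
    (γ : Fin r → ((Fin n → ℝ) → ℝ)) (hγ : ∀ j, ContDiff ℝ (⊤ : ℕ∞) (γ j))
    (hli : LinearIndependent ℝ γ)
    (Γ : Submodule ℝ ((Fin n → ℝ) → ℝ)) (hΓ : Γ = Submodule.span ℝ (Set.range γ))
    (hinvf : lieDerivSub f Γ ≤ Γ) (hinvg : ∀ i, lieDerivSub (g i) Γ ≤ Γ)
    (Ψ : (Fin n → ℝ) → (Fin r → ℝ)) (hΨ : Ψ = fun x => fun j => γ j x) :
    ∃ A : Matrix (Fin r) (Fin r) ℝ, ∃ B : Fin m → Matrix (Fin r) (Fin r) ℝ,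
      (∀ x, fderiv ℝ Ψ x (f x) = A.mulVec (Ψ x)) ∧
      (∀ i, ∀ x, fderiv ℝ Ψ x (g i x) = (B i).mulVec (Ψ x)) ∧
      ∀ (u : ℝ → (Fin m → ℝ)) (x : ℝ → (Fin n → ℝ)),
        (∀ t : ℝ, HasDerivAt x (f (x t) + ∑ i, u t i • g i (x t)) t) →
        ∀ t : ℝ, HasDerivAt (fun s => Ψ (x s))
          (A.mulVec (Ψ (x t)) + ∑ i, u t i • (B i).mulVec (Ψ (x t))) t := by
  subst hΓ hΨ
  have hd : ∀ j (x : Fin n → ℝ), DifferentiableAt ℝ (γ j) x :=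
    fun j x => ((hγ j).differentiable (by exact_mod_cast (ENat.top_ne_zero : (⊤ : ℕ∞) ≠ 0))).differentiableAt
  have hΨd : ∀ x : Fin n → ℝ, DifferentiableAt ℝ (fun x (j : Fin r) => γ j x) x :=
    fun x => differentiableAt_pi.mpr fun j => hd j x
  have hfd : ∀ (x : Fin n → ℝ) (v : Fin n → ℝ),
      fderiv ℝ (fun x (j : Fin r) => γ j x) x v = fun j => fderiv ℝ (γ j) x v := by
    intro x v
    rw [fderiv_pi (fun j => hd j x)]
    rfl
  have key : ∀ τ : (Fin n → ℝ) → (Fin n → ℝ),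
      lieDerivSub τ (Submodule.span ℝ (Set.range γ)) ≤ Submodule.span ℝ (Set.range γ) →
      ∃ M : Matrix (Fin r) (Fin r) ℝ, ∀ x,
        fderiv ℝ (fun x (j : Fin r) => γ j x) x (τ x) = M.mulVec (fun j => γ j x) := by
    intro τ hτ
    have h1 : ∀ j, ∃ c : Fin r → ℝ, (∑ k, c k • γ k) = lieDeriv τ (γ j) := by
      intro j
      have hm : lieDeriv τ (γ j) ∈ Submodule.span ℝ (Set.range γ) :=
        hτ (Submodule.subset_span ⟨γ j, Submodule.subset_span ⟨j, rfl⟩, rfl⟩)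
      exact (Submodule.mem_span_range_iff_exists_fun ℝ).mp hm
    choose c hc using h1
    refine ⟨Matrix.of c, fun x => ?_⟩
    rw [hfd]
    funext j
    have h2 := congrFun (hc j) x
    simp only [Finset.sum_apply, Pi.smul_apply, smul_eq_mul, lieDeriv] at h2
    simp [Matrix.mulVec, dotProduct, ← h2]
  obtain ⟨A, hA⟩ := key f hinvf
  choose B hB using fun i => key (g i) (hinvg i)
  refine ⟨A, B, hA, hB, ?_⟩
  intro u x hx t
  have h := (hΨd (x t)).hasFDerivAt.comp_hasDerivAt t (hx t)
  have heq : (fderiv ℝ (fun x (j : Fin r) => γ j x) (x t))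
      (f (x t) + ∑ i, u t i • g i (x t))
      = A.mulVec (fun j => γ j (x t)) + ∑ i, u t i • (B i).mulVec (fun j => γ j (x t)) := by
    rw [map_add, map_sum, hA]
    congr 1
    refine Finset.sum_congr rfl fun i _ => ?_
    rw [map_smul, hB]
  rw [← heq]
  exact h
end

section
/- Let Ψ: ℝⁿ → ℝʳ be smooth and suppose Ψ exactly bilinearizes the system with vector fields f, g_1, …, g_m and matrices A, B_1, …, B_m. Suppose P: ℝʳ → ℝⁿ satisfies P(Ψ(x)) = x for all x ∈ ℝⁿ (a left inverse of Ψ). Let u: [0, T] → ℝᵐ be continuous, let x: [0, T] → ℝⁿ be differentiable with ẋ(t) = f(x(t)) + Σᵢ uᵢ(t) gᵢ(x(t)) for all t, and let z: [0, T] → ℝʳ be any solution of the bilinear equation ż(t) = A z(t) + Σᵢ uᵢ(t) Bᵢ z(t) with z(0) = Ψ(x(0)). Then z(t) = Ψ(x(t)) and x(t) = P(z(t)) for all t ∈ [0, T]; that is, the nonlinear flow equals the composition P ∘ (bilinear flow) ∘ Ψ. -/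
open Set

private lemma sum_mulVec_aux {r m : ℕ} (N : Fin m → Matrix (Fin r) (Fin r) ℝ)
    (y : Fin r → ℝ) : (∑ i, N i).mulVec y = ∑ i, (N i).mulVec y := by
  induction (Finset.univ : Finset (Fin m)) using Finset.cons_induction with
  | empty => simp [Matrix.zero_mulVec]
  | cons a s ha ih => rw [Finset.sum_cons, Finset.sum_cons, Matrix.add_mulVec, ih]

/-- if `Ψ` exactly bilinearizes the system and `P` is a left inverse of `Ψ`, then
for continuous controls the solution of the bilinear system started at `Ψ(x(0))` coincides with
the lift of the nonlinear solution, and the nonlinear solution is recovered by `P`. -/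
theorem nonlinear_flow_eq_projected_bilinear_flow {n r m : ℕ} (T : ℝ) (hT : 0 ≤ T)
    (Ψ : (Fin n → ℝ) → (Fin r → ℝ)) (hΨ : ContDiff ℝ (⊤ : ℕ∞) Ψ)
    (f : (Fin n → ℝ) → (Fin n → ℝ)) (g : Fin m → (Fin n → ℝ) → (Fin n → ℝ))
    (hf : ContDiff ℝ (⊤ : ℕ∞) f) (hg : ∀ i, ContDiff ℝ (⊤ : ℕ∞) (g i))
    (A : Matrix (Fin r) (Fin r) ℝ) (B : Fin m → Matrix (Fin r) (Fin r) ℝ)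
    (hA : ∀ x, fderiv ℝ Ψ x (f x) = A.mulVec (Ψ x))
    (hB : ∀ i, ∀ x, fderiv ℝ Ψ x (g i x) = (B i).mulVec (Ψ x))
    (P : (Fin r → ℝ) → (Fin n → ℝ)) (hP : ∀ x, P (Ψ x) = x)
    (u : ℝ → (Fin m → ℝ)) (hu : ContinuousOn u (Icc (0 : ℝ) T))
    (x : ℝ → (Fin n → ℝ))
    (hx : ∀ t ∈ Icc (0 : ℝ) T,
      HasDerivWithinAt x (f (x t) + ∑ i, u t i • g i (x t)) (Icc (0 : ℝ) T) t)
    (z : ℝ → (Fin r → ℝ))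
    (hz : ∀ t ∈ Icc (0 : ℝ) T,
      HasDerivWithinAt z (A.mulVec (z t) + ∑ i, u t i • (B i).mulVec (z t)) (Icc (0 : ℝ) T) t)
    (hz0 : z 0 = Ψ (x 0)) :
    ∀ t ∈ Icc (0 : ℝ) T, z t = Ψ (x t) ∧ x t = P (z t) := by
  -- clamp function
  set σ : ℝ → ℝ := fun t => max 0 (min t T) with hσdef
  have hσmem : ∀ t, σ t ∈ Icc (0 : ℝ) T := fun t =>
    ⟨le_max_left _ _, max_le (by linarith [min_le_right t T]) (min_le_right t T)⟩
  have hσid : ∀ t ∈ Icc (0 : ℝ) T, σ t = t := fun t ht => by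
    simp only [hσdef]
    rw [min_eq_left ht.2, max_eq_right ht.1]
  -- bound on the control
  obtain ⟨C, hC⟩ := (isCompact_Icc : IsCompact (Icc (0 : ℝ) T)).exists_bound_of_continuousOn hu
  have hCi : ∀ t, ∀ i, |u (σ t) i| ≤ C := fun t i =>
    le_trans (norm_le_pi_norm (u (σ t)) i) (hC _ (hσmem t))
  have hC0 : 0 ≤ C := le_trans (norm_nonneg _) (hC 0 ⟨le_refl _, hT⟩)
  -- matrices as continuous linear maps
  set L : Matrix (Fin r) (Fin r) ℝ → ((Fin r → ℝ) →L[ℝ] (Fin r → ℝ)) :=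
    fun M => LinearMap.toContinuousLinearMap M.mulVecLin with hLdef
  set M : ℝ → Matrix (Fin r) (Fin r) ℝ := fun t => A + ∑ i, u (σ t) i • B i with hMdef
  set v : ℝ → (Fin r → ℝ) → (Fin r → ℝ) := fun t y => (L (M t)) y with hvdef
  have hLlin : ∀ t, L (M t) = L A + ∑ i, u (σ t) i • L (B i) := by
    intro t
    apply ContinuousLinearMap.ext
    intro y
    simp only [hLdef, hMdef, ContinuousLinearMap.add_apply, ContinuousLinearMap.sum_apply,
      ContinuousLinearMap.smul_apply, LinearMap.coe_toContinuousLinearMap',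
      Matrix.mulVecLin_apply]
    rw [Matrix.add_mulVec, sum_mulVec_aux]
    simp [Matrix.smul_mulVec]
  set K0 : ℝ := ‖L A‖ + C * ∑ i, ‖L (B i)‖ with hK0def
  have hLnorm : ∀ t, ‖L (M t)‖ ≤ K0 := by
    intro t
    rw [hLlin t]
    refine le_trans (norm_add_le _ _) (add_le_add le_rfl ?_)
    refine le_trans (norm_sum_le _ _) ?_
    rw [Finset.mul_sum]
    refine Finset.sum_le_sum fun i _ => ?_
    refine (norm_smul_le (u (σ t) i) (L (B i))).trans ?_
    exact mul_le_mul_of_nonneg_right (by simpa using hCi t i) (norm_nonneg _)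
  have hv : ∀ t, LipschitzWith K0.toNNReal (v t) := by
    intro t
    refine (L (M t)).lipschitz.weaken ?_
    have hK0nn : (0:ℝ) ≤ K0 := by
      rw [hK0def]
      have : (0:ℝ) ≤ C * ∑ i, ‖L (B i)‖ :=
        mul_nonneg hC0 (Finset.sum_nonneg fun i _ => norm_nonneg _)
      positivity
    rw [← NNReal.coe_le_coe, coe_nnnorm, Real.coe_toNNReal _ hK0nn]
    exact hLnorm t
  -- value of v on Icc
  have hvval : ∀ t ∈ Icc (0 : ℝ) T, ∀ y,
      v t y = A.mulVec y + ∑ i, u t i • (B i).mulVec y := by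
    intro t ht y
    rw [hvdef]
    simp only
    rw [hLlin t, hσid t ht]
    simp [hLdef, Matrix.smul_mulVec]
  -- the lifted solution
  set w : ℝ → (Fin r → ℝ) := fun t => Ψ (x t) with hwdef
  have hxcont : ContinuousOn x (Icc (0 : ℝ) T) := fun t ht =>
    (hx t ht).continuousWithinAt
  have hwcont : ContinuousOn w (Icc (0 : ℝ) T) :=
    hΨ.continuous.comp_continuousOn hxcont
  have hzcont : ContinuousOn z (Icc (0 : ℝ) T) := fun t ht =>
    (hz t ht).continuousWithinAt
  have hw' : ∀ t ∈ Ico (0 : ℝ) T, HasDerivWithinAt w (v t (w t)) (Ici t) t := by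
    intro t ht
    have hΨd : HasFDerivAt Ψ (fderiv ℝ Ψ (x t)) (x t) :=
      ((hΨ.differentiable (by simp)) (x t)).hasFDerivAt
    have h1 := hΨd.comp_hasDerivWithinAt t (hx t (Ico_subset_Icc_self ht))
    have h2 : (fderiv ℝ Ψ (x t)) (f (x t) + ∑ i, u t i • g i (x t)) = v t (w t) := by
      rw [map_add, map_sum, hA, hvval t (Ico_subset_Icc_self ht)]
      congr 1
      refine Finset.sum_congr rfl fun i _ => ?_
      rw [map_smul, hB]
    rw [h2] at h1
    exact h1.mono_of_mem_nhdsWithin (Icc_mem_nhdsGE_of_mem ht)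
  have hz' : ∀ t ∈ Ico (0 : ℝ) T, HasDerivWithinAt z (v t (z t)) (Ici t) t := by
    intro t ht
    have h1 := hz t (Ico_subset_Icc_self ht)
    rw [← hvval t (Ico_subset_Icc_self ht)] at h1
    exact h1.mono_of_mem_nhdsWithin (Icc_mem_nhdsGE_of_mem ht)
  have heq : EqOn z w (Icc (0 : ℝ) T) :=
    ODE_solution_unique hv hzcont hz' hwcont hw' (by simpa [hwdef] using hz0)
  intro t ht
  refine ⟨heq ht, ?_⟩
  rw [heq ht, hwdef]
  simp [hP]
end

section
/- Let Ψ: ℝⁿ → ℝʳ be smooth and suppose Ψ exactly bilinearizes the system with vector fields f, g_1, …, g_m and matrices A, B_1, …, B_m, and let P: ℝʳ → ℝⁿ satisfy P(Ψ(x)) = x for all x. Let 0 = t₀ ≤ t₁ ≤ ⋯ ≤ t_s = T be a partition, let 𝔲₀, …, 𝔲_{s−1} ∈ ℝᵐ be constant control vectors, and let x: [0, T] → ℝⁿ be continuous and satisfy, on each subinterval [t_k, t_{k+1}], ẋ(t) = f(x(t)) + Σᵢ (𝔲_k)ᵢ gᵢ(x(t)). Then x(T) = P( exp(δ_{s−1}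 M(𝔲_{s−1})) ⋯ exp(δ₁ M(𝔲₁)) exp(δ₀ M(𝔲₀)) Ψ(x(0)) ), where M(𝔲) = A + Σ_{i=1}^m 𝔲ᵢ Bᵢ, δ_k = t_{k+1} − t_k, and exp denotes the matrix exponential. -/
open Set

attribute [local instance] Matrix.linftyOpNormedRing Matrix.linftyOpNormedAlgebra

noncomputable def mvCLM {r : ℕ} : Matrix (Fin r) (Fin r) ℝ →L[ℝ] ((Fin r → ℝ) →L[ℝ] (Fin r → ℝ)) :=
  LinearMap.toContinuousLinearMap
    { toFun := fun M => LinearMap.toContinuousLinearMap (Matrix.mulVecLin M)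
      map_add' := by
        intro M N; ext v i; simp [Matrix.add_mulVec]
      map_smul' := by
        intro c M; ext v i; simp [Matrix.smul_mulVec] }

lemma mvCLM_apply {r : ℕ} (M : Matrix (Fin r) (Fin r) ℝ) (v : Fin r → ℝ) :
    mvCLM M v = M.mulVec v := rfl

lemma interval_step {r : ℕ} (M : Matrix (Fin r) (Fin r) ℝ) (a b : ℝ) (hab : a ≤ b)
    (z : ℝ → Fin r → ℝ)
    (hz : ∀ τ ∈ Icc a b, HasDerivWithinAt z (M.mulVec (z τ)) (Icc a b) τ) :
    z b = (NormedSpace.exp ((b - a) • M)).mulVec (z a) := by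
  set E : ℝ → Matrix (Fin r) (Fin r) ℝ := fun τ => NormedSpace.exp ((a - τ) • M) with hE
  have hEderiv : ∀ τ : ℝ, HasDerivAt E (-(E τ * M)) τ := by
    intro τ
    have h1 : HasDerivAt (fun u : ℝ => NormedSpace.exp (u • M))
        (NormedSpace.exp ((a - τ) • M) * M) (a - τ) :=
      hasDerivAt_exp_smul_const M (a - τ)
    have h2 : HasDerivAt (fun τ : ℝ => a - τ) (-1 : ℝ) τ := by
      simpa using (hasDerivAt_id τ).const_sub a
    have h3 := HasDerivAt.scomp τ h1 h2; simp only [neg_smul, one_smul] at h3; exact h3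
  set w : ℝ → Fin r → ℝ := fun τ => (E τ).mulVec (z τ) with hw
  have hwderiv : ∀ τ ∈ Icc a b, HasDerivWithinAt w 0 (Icc a b) τ := by
    intro τ hτ
    have hc : HasDerivWithinAt (fun τ => mvCLM (E τ)) (mvCLM (-(E τ * M))) (Icc a b) τ :=
      (mvCLM.hasFDerivAt.comp_hasDerivWithinAt τ ((hEderiv τ).hasDerivWithinAt))
    have := hc.clm_apply (hz τ hτ)
    have heq : mvCLM (-(E τ * M)) (z τ) + mvCLM (E τ) (M.mulVec (z τ)) = 0 := by
      simp [mvCLM_apply, Matrix.neg_mulVec, Matrix.mulVec_mulVec]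
    rw [heq] at this
    exact this.congr (fun y _ => rfl) rfl
  have hwconst : w b = w a := by
    have hcont : ContinuousOn w (Icc a b) := fun τ hτ => (hwderiv τ hτ).continuousWithinAt
    have := constant_of_has_deriv_right_zero hcont (fun τ hτ =>
      ((hwderiv τ (Ico_subset_Icc_self hτ)).mono_of_mem_nhdsWithin (Icc_mem_nhdsGE_of_mem hτ)))
    exact this b (right_mem_Icc.mpr hab)
  -- w b = w a means exp((a-b)•M).mulVec (z b) = exp(0).mulVec (z a) = z a
  have ha : w a = z a := by simp [hw, hE, Matrix.one_mulVec, NormedSpace.exp_zero]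
  have hinv : NormedSpace.exp ((b - a) • M) * NormedSpace.exp ((a - b) • M) = 1 := by
    erw [← NormedSpace.exp_add_of_commute (Commute.smul_left (Commute.smul_right (Commute.refl M) (a - b)) (b - a))]
    rw [← add_smul]
    norm_num [NormedSpace.exp_zero]
  calc z b = ((NormedSpace.exp ((b - a) • M)) * NormedSpace.exp ((a - b) • M)).mulVec (z b) := by
        rw [hinv, Matrix.one_mulVec]
    _ = (NormedSpace.exp ((b - a) • M)).mulVec (w b) := by
        rw [← Matrix.mulVec_mulVec]
    _ = (NormedSpace.exp ((b - a) • M)).mulVec (z a) := by rw [hwconst, ha]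


/-- under exact bilinearization with left inverse `P`, the endpoint of a solution
driven by piecewise-constant controls is obtained by projecting the product of the matrix
exponentials `exp(δₖ (A + Σᵢ 𝔲ₖᵢ Bᵢ))` (applied in order) to the lifted initial state. -/
theorem piecewise_constant_control_endpoint {n r m s : ℕ}
    (Ψ : (Fin n → ℝ) → (Fin r → ℝ)) (hΨ : ContDiff ℝ (⊤ : ℕ∞) Ψ)
    (f : (Fin n → ℝ) → (Fin n → ℝ)) (g : Fin m → (Fin n → ℝ) → (Fin n → ℝ))
    (hf : ContDiff ℝ (⊤ : ℕ∞) f) (hg : ∀ i, ContDiff ℝ (⊤ : ℕ∞) (g i))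
    (A : Matrix (Fin r) (Fin r) ℝ) (B : Fin m → Matrix (Fin r) (Fin r) ℝ)
    (hA : ∀ x, fderiv ℝ Ψ x (f x) = A.mulVec (Ψ x))
    (hB : ∀ i, ∀ x, fderiv ℝ Ψ x (g i x) = (B i).mulVec (Ψ x))
    (P : (Fin r → ℝ) → (Fin n → ℝ)) (hP : ∀ x, P (Ψ x) = x)
    (t : Fin (s + 1) → ℝ) (ht : Monotone t) (ht0 : t 0 = 0)
    (𝔲 : Fin s → (Fin m → ℝ))
    (x : ℝ → (Fin n → ℝ))
    (hx : ∀ k : Fin s, ∀ τ ∈ Icc (t k.castSucc) (t k.succ),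
      HasDerivWithinAt x (f (x τ) + ∑ i, 𝔲 k i • g i (x τ)) (Icc (t k.castSucc) (t k.succ)) τ) :
    x (t (Fin.last s)) =
      P ((List.ofFn fun k : Fin s =>
            NormedSpace.exp
              ((t k.succ - t k.castSucc) • (A + ∑ i, 𝔲 k i • B i))).reverse.prod.mulVec
          (Ψ (x (t 0)))) := by
  set F : Fin s → Matrix (Fin r) (Fin r) ℝ := fun k =>
    NormedSpace.exp ((t k.succ - t k.castSucc) • (A + ∑ i, 𝔲 k i • B i)) with hF
  -- key step per interval
  have key : ∀ k : Fin s, Ψ (x (t k.succ)) = (F k).mulVec (Ψ (x (t k.castSucc))) := by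
    intro k
    set M : Matrix (Fin r) (Fin r) ℝ := A + ∑ i, 𝔲 k i • B i with hM
    have hz : ∀ τ ∈ Icc (t k.castSucc) (t k.succ),
        HasDerivWithinAt (fun τ => Ψ (x τ)) (M.mulVec (Ψ (x τ)))
          (Icc (t k.castSucc) (t k.succ)) τ := by
      intro τ hτ
      have hΨd := (hΨ.differentiable (by simp) (x τ)).hasFDerivAt
      have := hΨd.comp_hasDerivWithinAt τ (hx k τ hτ)
      have heq : fderiv ℝ Ψ (x τ) (f (x τ) + ∑ i, 𝔲 k i • g i (x τ))
          = M.mulVec (Ψ (x τ)) := by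
        rw [map_add, map_sum, hA]
        have : ∀ i, fderiv ℝ Ψ (x τ) (𝔲 k i • g i (x τ))
            = 𝔲 k i • (B i).mulVec (Ψ (x τ)) := by
          intro i; rw [map_smul, hB]
        have hsum : (∑ i, 𝔲 k i • B i).mulVec (Ψ (x τ)) = ∑ i, 𝔲 k i • (B i).mulVec (Ψ (x τ)) := by
          ext j
          simp [Matrix.mulVec, dotProduct, Finset.sum_mul, Finset.sum_apply,
            Matrix.sum_apply, Finset.mul_sum]
          rw [Finset.sum_comm]
          exact Finset.sum_congr rfl fun _ _ => Finset.sum_congr rfl fun _ _ => by ring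
        simp_rw [this, hM, Matrix.add_mulVec, hsum]
      rwa [heq] at this
    exact interval_step M _ _ (ht (Fin.castSucc_le_succ k)) _ hz
  have main : ∀ k : ℕ, ∀ hk : k ≤ s,
      Ψ (x (t ⟨k, Nat.lt_succ_of_le hk⟩)) =
        ((List.ofFn F).take k).reverse.prod.mulVec (Ψ (x (t 0))) := by
    intro k
    induction k with
    | zero => intro hk; simp [Matrix.one_mulVec]
    | succ k ih =>
      intro hk
      have hks : k < s := hk
      have h1 : (⟨k + 1, Nat.lt_succ_of_le hk⟩ : Fin (s+1)) = (⟨k, hks⟩ : Fin s).succ := rfl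
      have h2 : (⟨k, Nat.lt_succ_of_le hks.le⟩ : Fin (s+1)) = (⟨k, hks⟩ : Fin s).castSucc := rfl
      rw [h1, key ⟨k, hks⟩, ← h2, ih hks.le, Matrix.mulVec_mulVec]
      congr 1
      rw [List.take_succ, List.getElem?_ofFn]
      simp [List.ofFnNthVal, hks, List.reverse_append]
  have hlast := main s le_rfl
  have hfin : (⟨s, Nat.lt_succ_of_le le_rfl⟩ : Fin (s+1)) = Fin.last s := rfl
  rw [hfin] at hlast
  have htake : (List.ofFn F).take s = List.ofFn F := by
    apply List.take_of_length_le; simp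
  rw [htake] at hlast
  rw [← hP (x (t (Fin.last s))), hlast]
end

section
/- Define Ψ: ℝ³ → ℝ⁶ by Ψ(x₁, x₂, x₃) = (x₁, x₂, x₃, cos x₃, sin x₃, 1), the unicycle control vector fields g₁(x) = (cos x₃, sin x₃, 0) and g₂(x) = (0, 0, 1) on ℝ³, and the matrices B₁ = e₁e₄' + e₂e₅' and B₂ = e₃e₆' − e₄e₅' + e₅e₄' in ℝ^{6×6}, where e_j ∈ ℝ⁶ is the j-th standard basis vector. Then DΨ(x) g₁(x) = B₁ Ψ(x) and DΨ(x) g₂(x) = B₂ Ψ(x) for all x ∈ ℝ³; moreover Ψ is injective and its Fréchet derivative DΨ(x) is injective at every x ∈ ℝ³, so Ψ is a smooth embedding that exactly bilinearizes the unicycle system ẋ = u₁ g₁(x) + u₂ g₂(x). -/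
open Matrix



noncomputable abbrev pr (i : Fin 3) : (Fin 3 → ℝ) →L[ℝ] ℝ :=
  ContinuousLinearMap.proj (R := ℝ) (φ := fun _ : Fin 3 => ℝ) i

noncomputable def Duni (x : Fin 3 → ℝ) : (Fin 3 → ℝ) →L[ℝ] (Fin 6 → ℝ) :=
  ContinuousLinearMap.pi ![pr 0, pr 1, pr 2,
    (-Real.sin (x 2)) • pr 2, (Real.cos (x 2)) • pr 2, 0]

lemma hasD (x : Fin 3 → ℝ) :
    HasFDerivAt (fun x : Fin 3 → ℝ => ![x 0, x 1, x 2, Real.cos (x 2), Real.sin (x 2), (1:ℝ)])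
      (Duni x) x := by
  rw [hasFDerivAt_pi']
  intro i
  have h0 : HasFDerivAt (fun x : Fin 3 → ℝ => x 0) (pr 0) x := hasFDerivAt_apply (𝕜 := ℝ) 0 x
  have h1 : HasFDerivAt (fun x : Fin 3 → ℝ => x 1) (pr 1) x := hasFDerivAt_apply (𝕜 := ℝ) 1 x
  have h2 : HasFDerivAt (fun x : Fin 3 → ℝ => x 2) (pr 2) x := hasFDerivAt_apply (𝕜 := ℝ) 2 x
  have hc : HasFDerivAt (fun x : Fin 3 → ℝ => Real.cos (x 2)) ((-Real.sin (x 2)) • pr 2) x :=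
    by have := (Real.hasDerivAt_cos (x 2)).comp_hasFDerivAt x h2; exact this
  have hs : HasFDerivAt (fun x : Fin 3 → ℝ => Real.sin (x 2)) ((Real.cos (x 2)) • pr 2) x :=
    by have := (Real.hasDerivAt_sin (x 2)).comp_hasFDerivAt x h2; exact this
  have hk : HasFDerivAt (𝕜 := ℝ) (fun _ : Fin 3 → ℝ => (1:ℝ)) 0 x := hasFDerivAt_const 1 x
  fin_cases i
  · exact h0.congr_fderiv (by ext v; simp [Duni])
  · exact h1.congr_fderiv (by ext v; simp [Duni])
  · exact h2.congr_fderiv (by ext v; simp [Duni])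
  · exact hc.congr_fderiv (by ext v; simp [Duni])
  · exact hs.congr_fderiv (by ext v; simp [Duni])
  · exact hk.congr_fderiv (by ext v; show (0:ℝ) = Matrix.vecHead (Matrix.vecTail (Matrix.vecTail (Matrix.vecTail (Matrix.vecTail (Matrix.vecTail ![pr 0, pr 1, pr 2, (-Real.sin (x 2)) • pr 2, (Real.cos (x 2)) • pr 2, 0]))))) v; rfl)

lemma cv5 {α : Type*} (a b c d e f : α) : ![a, b, c, d, e, f] 5 = f := rfl


/-- the map `Ψ(x) = (x₁, x₂, x₃, cos x₃, sin x₃, 1)` pushes the unicycle control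
vector fields `g₁(x) = (cos x₃, sin x₃, 0)` and `g₂(x) = (0,0,1)` forward to the linear fields
given by `B₁ = e₁e₄' + e₂e₅'` and `B₂ = e₃e₆' − e₄e₅' + e₅e₄'`; moreover `Ψ` is injective with
everywhere injective Fréchet derivative (indeed a topological embedding), i.e. `Ψ` is a smooth
embedding exactly bilinearizing the unicycle system. -/
theorem unicycle_exactly_bilinearized
    (Ψ : (Fin 3 → ℝ) → (Fin 6 → ℝ))
    (hΨ : Ψ = fun x => ![x 0, x 1, x 2, Real.cos (x 2), Real.sin (x 2), 1])
    (g₁ g₂ : (Fin 3 → ℝ) → (Fin 3 → ℝ))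
    (hg₁ : g₁ = fun x => ![Real.cos (x 2), Real.sin (x 2), 0])
    (hg₂ : g₂ = fun _ => ![0, 0, 1])
    (e : Fin 6 → (Fin 6 → ℝ)) (he : e = fun j => Pi.single j 1)
    (B₁ B₂ : Matrix (Fin 6) (Fin 6) ℝ)
    (hB₁ : B₁ = vecMulVec (e 0) (e 3) + vecMulVec (e 1) (e 4))
    (hB₂ : B₂ = vecMulVec (e 2) (e 5) - vecMulVec (e 3) (e 4) + vecMulVec (e 4) (e 3)) :
    (∀ x, fderiv ℝ Ψ x (g₁ x) = B₁.mulVec (Ψ x)) ∧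
    (∀ x, fderiv ℝ Ψ x (g₂ x) = B₂.mulVec (Ψ x)) ∧
    Function.Injective Ψ ∧
    (∀ x, Function.Injective (fderiv ℝ Ψ x)) ∧
    Topology.IsEmbedding Ψ := by
  subst hΨ hg₁ hg₂ he hB₁ hB₂
  have hf : ∀ x, fderiv ℝ
      (fun x : Fin 3 → ℝ => ![x 0, x 1, x 2, Real.cos (x 2), Real.sin (x 2), (1:ℝ)]) x
      = Duni x := fun x => (hasD x).fderiv
  have hinj : Function.Injective
      (fun x : Fin 3 → ℝ => ![x 0, x 1, x 2, Real.cos (x 2), Real.sin (x 2), (1:ℝ)]) := by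
    intro a b h
    funext i
    fin_cases i
    · exact congrFun h 0
    · exact congrFun h 1
    · exact congrFun h 2
  refine ⟨?_, ?_, hinj, ?_, ?_⟩
  · intro x
    rw [hf]
    funext i
    fin_cases i <;>
      simp [Duni, Matrix.mulVec, Matrix.vecMulVec_apply, dotProduct, Fin.sum_univ_six,
        Pi.single_apply, Matrix.cons_val_succ, cv5]
  · intro x
    rw [hf]
    funext i
    fin_cases i <;>
      simp [Duni, Matrix.mulVec, Matrix.vecMulVec_apply, dotProduct, Fin.sum_univ_six,
        Pi.single_apply, Matrix.cons_val_succ, cv5]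
  · intro x
    rw [hf]
    intro v w h
    funext i
    have h0 := congrFun h 0
    have h1 := congrFun h 1
    have h2 := congrFun h 2
    simp [Duni] at h0 h1 h2
    fin_cases i <;> assumption
  · have hcont : Continuous
        (fun x : Fin 3 → ℝ => ![x 0, x 1, x 2, Real.cos (x 2), Real.sin (x 2), (1:ℝ)]) := by
      apply continuous_pi
      intro i
      fin_cases i <;> simp [cv5] <;> fun_prop
    have hπ : Continuous (fun y : Fin 6 → ℝ => (![y 0, y 1, y 2] : Fin 3 → ℝ)) := by
      apply continuous_pi
      intro i
      fin_cases i <;> simp <;> fun_prop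
    refine Topology.IsEmbedding.of_comp hcont hπ ?_
    have : (fun y : Fin 6 → ℝ => (![y 0, y 1, y 2] : Fin 3 → ℝ)) ∘
        (fun x : Fin 3 → ℝ => ![x 0, x 1, x 2, Real.cos (x 2), Real.sin (x 2), (1:ℝ)])
        = id := by
      funext x i
      fin_cases i <;> rfl
    rw [this]
    exact Topology.IsEmbedding.id
end
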